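/- Let p ≥ 1, let λ₁,…,λ_{p+1} be distinct real numbers, and set a = min_{1≤k≤p+1} λ_k, b = max_{1≤k≤p+1} λ_k. Let f : ℝ → ℂ be (p+1)-times continuously differentiable on an open interval containing [a,b]. Then Σ_{j=1}^{p+1} f(λ_j)/∏_{k≠j}(λ_j − λ_k) = (1/p!) f^{(p)}(a) + (1/p!) ∫_a^b f^{(p+1)}(t) · ( Σ_{j=1}^{p+1} (λ_j − t)_+^p/∏_{k≠j}(λ_j − λ_k) ) dt. -/

import Mathlib

open Finset MeasureTheory intervalIntegral Polynomial

lemma basis_coeff_top {n : ℕ} (l : Fin (n + 1) → ℝ) (j : Fin (n + 1)) :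
    (Lagrange.basis univ l j).coeff n = ∏ k ∈ univ.erase j, (l j - l k)⁻¹ := by
  have hb : Lagrange.basis univ l j
      = C (∏ k ∈ univ.erase j, (l j - l k)⁻¹) * Lagrange.nodal (univ.erase j) l := by
    rw [Lagrange.basis, Lagrange.nodal, map_prod, ← prod_mul_distrib]
    exact prod_congr rfl fun k _ => rfl
  have hnd : (Lagrange.nodal (univ.erase j) l).natDegree = n := by
    simp [Lagrange.natDegree_nodal, card_erase_of_mem (mem_univ j), card_univ]
  have := (Lagrange.nodal_monic (s := univ.erase j) (v := l)).coeff_natDegree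
  rw [hnd] at this
  rw [hb, coeff_C_mul, this, mul_one]

lemma lagA {p : ℕ} (l : Fin (p + 1) → ℝ) (hl : Function.Injective l) (a : ℝ) {m : ℕ} (hm : m ≤ p) :
    ∑ j : Fin (p + 1), (l j - a) ^ m / ∏ k ∈ univ.erase j, (l j - l k)
      = if m = p then 1 else 0 := by
  classical
  set q : ℝ[X] := (X - C a) ^ m with hq
  have hmon : q.Monic := (monic_X_sub_C a).pow m
  have hnd : q.natDegree = m := by simp [hq, natDegree_pow]
  have hdeg : q.degree < ((univ : Finset (Fin (p + 1))).card : WithBot ℕ) := by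
    refine lt_of_le_of_lt q.degree_le_natDegree ?_
    rw [hnd, card_univ, Fintype.card_fin]
    exact_mod_cast Nat.lt_succ_of_le hm
  have hid := Lagrange.eq_interpolate hl.injOn hdeg
  have hc := congrArg (fun r : ℝ[X] => r.coeff p) hid
  simp only [Lagrange.interpolate_apply, finset_sum_coeff, coeff_C_mul] at hc
  have hcq : q.coeff p = if m = p then 1 else 0 := by
    rcases eq_or_lt_of_le hm with h | h
    · subst h; simpa [hnd] using hmon.coeff_natDegree
    · rw [coeff_eq_zero_of_natDegree_lt (by omega), if_neg (by omega)]
  rw [hcq] at hc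
  rw [hc]
  refine sum_congr rfl fun j _ => ?_
  rw [basis_coeff_top l j, div_eq_mul_inv, prod_inv_distrib]
  simp [hq]

lemma taylor_int {u v : ℝ} {f : ℝ → ℂ} {p : ℕ} (hf : ContDiffOn ℝ (p + 1) f (Set.Ioo u v))
    {a x : ℝ} (ha : a ∈ Set.Ioo u v) (hx : x ∈ Set.Ioo u v) :
    f x = taylorWithinEval f p (Set.Ioo u v) a x
      + ∫ t in a..x,
          ((p.factorial : ℝ)⁻¹ * (x - t) ^ p) • iteratedDerivWithin (p + 1) f (Set.Ioo u v) t := by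
  set s := Set.Ioo u v with hs_def
  have hs : IsOpen s := isOpen_Ioo
  have hsu : UniqueDiffOn ℝ s := hs.uniqueDiffOn
  have hsub : Set.uIcc a x ⊆ s := Set.ordConnected_Ioo.uIcc_subset ha hx
  have hfp : ContDiffOn ℝ p f s := hf.of_le (by exact_mod_cast Nat.le_succ p)
  have hdiff : DifferentiableOn ℝ (iteratedDerivWithin p f s) s :=
    hf.differentiableOn_iteratedDerivWithin (by exact_mod_cast Nat.lt_succ_self p) hsu
  have hderiv : ∀ t ∈ Set.uIcc a x, HasDerivAt (fun y => taylorWithinEval f p s y x)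
      (((p.factorial : ℝ)⁻¹ * (x - t) ^ p) • iteratedDerivWithin (p + 1) f s t) t := by
    intro t ht
    have hts : t ∈ s := hsub ht
    exact (hasDerivWithinAt_taylorWithinEval hsu self_mem_nhdsWithin hts
      subset_rfl hfp (hdiff t hts)).hasDerivAt (hs.mem_nhds hts)
  have hcont : ContinuousOn
      (fun t => ((p.factorial : ℝ)⁻¹ * (x - t) ^ p) • iteratedDerivWithin (p + 1) f s t)
      (Set.uIcc a x) := by
    apply ContinuousOn.fun_smul
    · exact (continuous_const.mul ((continuous_const.sub continuous_id).pow p)).continuousOn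
    · exact (hf.continuousOn_iteratedDerivWithin (le_refl _) hsu).mono hsub
  have key := integral_eq_sub_of_hasDerivAt hderiv (hcont.intervalIntegrable)
  rw [taylorWithinEval_self] at key
  rw [key]; ring

theorem stmt7 (p : ℕ) (hp : 1 ≤ p) (l : Fin (p + 1) → ℝ) (hl : Function.Injective l)
    (a b : ℝ) (ha : a = univ.inf' univ_nonempty l) (hb : b = univ.sup' univ_nonempty l)
    (u v : ℝ) (hu : u < a) (hv : b < v)
    (f : ℝ → ℂ) (hf : ContDiffOn ℝ (p + 1) f (Set.Ioo u v)) :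
    ∑ j : Fin (p + 1), f (l j) / ((∏ k ∈ univ.erase j, (l j - l k) : ℝ) : ℂ)
      = (p.factorial : ℂ)⁻¹ * iteratedDerivWithin p f (Set.Ioo u v) a
        + (p.factorial : ℂ)⁻¹ *
          ∫ t in a..b,
            iteratedDerivWithin (p + 1) f (Set.Ioo u v) t *
              ((∑ j : Fin (p + 1),
                  (if 0 ≤ l j - t then (l j - t) ^ p else 0) /
                    ∏ k ∈ univ.erase j, (l j - l k) : ℝ) : ℂ) := by
  classical
  set s := Set.Ioo u v with hs_def
  set g : ℝ → ℂ := iteratedDerivWithin (p + 1) f s with hg_def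
  have hs : IsOpen s := isOpen_Ioo
  have hsu : UniqueDiffOn ℝ s := hs.uniqueDiffOn
  have hal : ∀ j, a ≤ l j := fun j => ha ▸ inf'_le l (mem_univ j)
  have hlb : ∀ j, l j ≤ b := fun j => hb ▸ le_sup' l (mem_univ j)
  have hab : a ≤ b := (hal 0).trans (hlb 0)
  have hIcc : Set.Icc a b ⊆ s := fun t ht => ⟨lt_of_lt_of_le hu ht.1, lt_of_le_of_lt ht.2 hv⟩
  have haS : a ∈ s := hIcc ⟨le_refl a, hab⟩
  have hgc : ContinuousOn g (Set.Icc a b) :=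
    (hf.continuousOn_iteratedDerivWithin (le_refl _) hsu).mono hIcc
  -- truncated kernel
  set τ : Fin (p + 1) → ℝ → ℝ := fun j t => if 0 ≤ l j - t then (l j - t) ^ p else 0 with hτ_def
  have hτ_eq : ∀ j t, τ j t = (max (l j - t) 0) ^ p := by
    intro j t
    simp only [hτ_def]
    rcases le_or_gt 0 (l j - t) with h | h
    · rw [if_pos h, max_eq_left h]
    · rw [if_neg (not_le.2 h), max_eq_right h.le, zero_pow (by omega : p ≠ 0)]
  have hτ_cont : ∀ j, Continuous (τ j) := by
    intro j
    have : Continuous fun t => (max (l j - t) 0) ^ p :=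
      ((continuous_const.sub continuous_id).max continuous_const).pow p
    simpa [funext (hτ_eq j)] using this
  have hker_cont : ∀ j : Fin (p + 1), ContinuousOn
      (fun t => ((p.factorial : ℝ)⁻¹ * τ j t) • g t) (Set.Icc a b) := fun j =>
    (continuous_const.mul (hτ_cont j)).continuousOn.smul hgc
  -- Step 2: rewrite the remainder integral with truncated kernel
  have hR : ∀ j : Fin (p + 1),
      (∫ t in a..(l j), ((p.factorial : ℝ)⁻¹ * (l j - t) ^ p) • g t)
        = ∫ t in a..b, ((p.factorial : ℝ)⁻¹ * τ j t) • g t := by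
    intro j
    have h1 : (∫ t in a..(l j), ((p.factorial : ℝ)⁻¹ * (l j - t) ^ p) • g t)
        = ∫ t in a..(l j), ((p.factorial : ℝ)⁻¹ * τ j t) • g t := by
      refine integral_congr fun t ht => ?_
      rw [Set.uIcc_of_le (hal j)] at ht
      have h0 : 0 ≤ l j - t := by linarith [ht.2]
      simp only [hτ_def, if_pos h0]
    have h2 : (∫ t in (l j)..b, ((p.factorial : ℝ)⁻¹ * τ j t) • g t) = 0 := by
      rw [show (0 : ℂ) = ∫ t in (l j)..b, (0 : ℂ) from (by simp)]
      refine integral_congr fun t ht => ?_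
      rw [Set.uIcc_of_le (hlb j)] at ht
      have hτ0 : τ j t = 0 := by
        simp only [hτ_def]
        rcases le_or_gt 0 (l j - t) with h | h
        · have : l j - t = 0 := le_antisymm (by linarith [ht.1]) h
          rw [if_pos h, this, zero_pow (by omega : p ≠ 0)]
        · rw [if_neg (not_le.2 h)]
      rw [hτ0, mul_zero, zero_smul]
    have hint1 : IntervalIntegrable (fun t => ((p.factorial : ℝ)⁻¹ * τ j t) • g t)
        volume a (l j) := by
      apply ContinuousOn.intervalIntegrable
      refine (hker_cont j).mono ?_
      rw [Set.uIcc_of_le (hal j)]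
      exact Set.Icc_subset_Icc le_rfl (hlb j)
    have hint2 : IntervalIntegrable (fun t => ((p.factorial : ℝ)⁻¹ * τ j t) • g t)
        volume (l j) b := by
      apply ContinuousOn.intervalIntegrable
      refine (hker_cont j).mono ?_
      rw [Set.uIcc_of_le (hlb j)]
      exact Set.Icc_subset_Icc (hal j) le_rfl
    rw [h1, ← integral_add_adjacent_intervals hint1 hint2, h2, add_zero]
  -- Step 1: Taylor expansion of each value
  have hTay : ∀ j : Fin (p + 1), f (l j) = taylorWithinEval f p s a (l j)
      + ∫ t in a..b, ((p.factorial : ℝ)⁻¹ * τ j t) • g t := by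
    intro j
    rw [← hR j]
    exact taylor_int hf haS (hIcc ⟨hal j, hlb j⟩)
  -- abbreviations
  set d : ℕ → ℂ := fun m => iteratedDerivWithin m f s a with hd_def
  -- Step 3a: polynomial part
  have hT : (∑ j : Fin (p + 1), taylorWithinEval f p s a (l j)
        / ((∏ k ∈ univ.erase j, (l j - l k) : ℝ) : ℂ))
      = (p.factorial : ℂ)⁻¹ * d p := by
    simp only [taylor_within_apply, sum_div]
    rw [sum_comm]
    have hstep : ∀ m ∈ Finset.range (p + 1),
        (∑ j : Fin (p + 1), (((m.factorial : ℝ)⁻¹ * (l j - a) ^ m) • d m)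
          / ((∏ k ∈ univ.erase j, (l j - l k) : ℝ) : ℂ))
        = if m = p then (p.factorial : ℂ)⁻¹ * d p else 0 := by
      intro m hm
      have hA := lagA l hl a (Nat.lt_succ_iff.mp (Finset.mem_range.mp hm))
      have hpt : ∀ j : Fin (p + 1), (((m.factorial : ℝ)⁻¹ * (l j - a) ^ m) • d m)
            / ((∏ k ∈ univ.erase j, (l j - l k) : ℝ) : ℂ)
          = ((m.factorial : ℂ))⁻¹ * d m
              * ((((l j - a) ^ m / ∏ k ∈ univ.erase j, (l j - l k) : ℝ)) : ℂ) := by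
        intro j
        push_cast [Complex.real_smul]
        ring
      rw [Finset.sum_congr rfl fun j _ => hpt j, ← Finset.mul_sum,
        ← Complex.ofReal_sum, hA]
      rcases eq_or_ne m p with h | h
      · subst h; simp
      · simp [h]
    rw [Finset.sum_congr rfl hstep]
    simp
  -- Step 3b: integral part
  have hIcc' : ∀ j : Fin (p+1), IntervalIntegrable
      (fun t => (((p.factorial : ℝ)⁻¹ * τ j t) • g t)
        / ((∏ k ∈ univ.erase j, (l j - l k) : ℝ) : ℂ)) volume a b := by
    intro j
    apply ContinuousOn.intervalIntegrable
    rw [Set.uIcc_of_le hab]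
    exact (hker_cont j).div_const _
  have hInt : (∑ j : Fin (p + 1), (∫ t in a..b, ((p.factorial : ℝ)⁻¹ * τ j t) • g t)
        / ((∏ k ∈ univ.erase j, (l j - l k) : ℝ) : ℂ))
      = (p.factorial : ℂ)⁻¹ * ∫ t in a..b, g t
          * ((∑ j : Fin (p + 1), τ j t / ∏ k ∈ univ.erase j, (l j - l k) : ℝ) : ℂ) := by
    rw [← intervalIntegral.integral_const_mul]
    rw [Finset.sum_congr rfl fun j _ => (intervalIntegral.integral_div _ _).symm]
    rw [← intervalIntegral.integral_finset_sum (fun j _ => hIcc' j)]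
    refine integral_congr fun t _ => ?_
    have hpt : ∀ j : Fin (p + 1), (((p.factorial : ℝ)⁻¹ * τ j t) • g t)
          / ((∏ k ∈ univ.erase j, (l j - l k) : ℝ) : ℂ)
        = (p.factorial : ℂ)⁻¹ * (g t
            * (((τ j t / ∏ k ∈ univ.erase j, (l j - l k) : ℝ)) : ℂ)) := by
      intro j
      push_cast [Complex.real_smul]
      ring
    rw [Finset.sum_congr rfl fun j _ => hpt j, ← Finset.mul_sum, ← Finset.mul_sum,
      ← Complex.ofReal_sum]
  -- assemble
  calc ∑ j : Fin (p + 1), f (l j) / ((∏ k ∈ univ.erase j, (l j - l k) : ℝ) : ℂ)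
      = ∑ j : Fin (p + 1), (taylorWithinEval f p s a (l j)
            / ((∏ k ∈ univ.erase j, (l j - l k) : ℝ) : ℂ)
          + (∫ t in a..b, ((p.factorial : ℝ)⁻¹ * τ j t) • g t)
            / ((∏ k ∈ univ.erase j, (l j - l k) : ℝ) : ℂ)) := by
        refine Finset.sum_congr rfl fun j _ => ?_
        rw [hTay j, add_div]
    _ = (p.factorial : ℂ)⁻¹ * d p
        + (p.factorial : ℂ)⁻¹ * ∫ t in a..b, g t
            * ((∑ j : Fin (p + 1), τ j t / ∏ k ∈ univ.erase j, (l j - l k) : ℝ) : ℂ) := by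
        rw [Finset.sum_add_distrib, hT, hInt]
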